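/- For every real x ≥ 1 and 0 ≤ v ≤ 1, we have v(x-1)(1 - x^(v-1))/2 + x^v ≤ (1-v) + v x ≤ v(x-1)(1 - ((1+x)/2)^(v-1)) + x^v. -/

import Mathlib

open Real Set

/-- Bernoulli's inequality for exponents in `[-1, 0]`. -/
lemma bern_neg {t p : ℝ} (ht : 1 ≤ t) (hp0 : -1 ≤ p) (hp1 : p ≤ 0) :
    1 + p * (t - 1) ≤ t ^ p := by
  have ht0 : (0:ℝ) < t := lt_of_lt_of_le one_pos ht
  have hq : t ^ (-p) ≤ 1 + (-p) * (t - 1) := by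
    have h := rpow_one_add_le_one_add_mul_self (s := t - 1) (p := -p)
      (by linarith) (by linarith) (by linarith)
    rwa [show (1:ℝ) + (t - 1) = t by ring] at h
  have e : t ^ p * t ^ (-p) = 1 := by
    rw [← rpow_add ht0, add_neg_cancel, rpow_zero]
  have hp2 : 0 < t ^ p := rpow_pos_of_pos ht0 _
  have hq2 : 0 < t ^ (-p) := rpow_pos_of_pos ht0 _
  nlinarith [sq_nonneg (p * (t - 1)), e, hq, hp2, hq2]

theorem young_additive_refine (x v : ℝ) (hx : 1 ≤ x) (hv0 : 0 ≤ v) (hv1 : v ≤ 1) :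
    v * (x - 1) * (1 - x ^ (v - 1)) / 2 + x ^ v ≤ (1 - v) + v * x ∧
    (1 - v) + v * x ≤ v * (x - 1) * (1 - ((1 + x) / 2) ^ (v - 1)) + x ^ v := by
  -- the two auxiliary functions
  set F : ℝ → ℝ := fun s => (1 - v) + v * s - s ^ v - v * ((s - 1) * (1 - s ^ (v - 1))) / 2
    with hFdef
  set H : ℝ → ℝ := fun s => v * ((s - 1) * (1 - ((1 + s) / 2) ^ (v - 1))) + s ^ v
    - ((1 - v) + v * s) with hHdef
  -- derivatives
  have hdF : ∀ t : ℝ, 0 < t → HasDerivAt F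
      (v - v * t ^ (v - 1)
        - v * ((1 - t ^ (v - 1)) + (t - 1) * (-((v - 1) * t ^ (v - 2)))) / 2) t := by
    intro t ht0
    have h1 : HasDerivAt (fun s : ℝ => s ^ v) (v * t ^ (v - 1)) t :=
      Real.hasDerivAt_rpow_const (Or.inl ht0.ne')
    have h2 : HasDerivAt (fun s : ℝ => s ^ (v - 1)) ((v - 1) * t ^ (v - 2)) t := by
      have h := Real.hasDerivAt_rpow_const (x := t) (p := v - 1) (Or.inl ht0.ne')
      rwa [show v - 1 - 1 = v - 2 by ring] at h
    have h3 : HasDerivAt (fun s : ℝ => (s - 1) * (1 - s ^ (v - 1)))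
        ((1 - t ^ (v - 1)) + (t - 1) * (-((v - 1) * t ^ (v - 2)))) t := by
      have ha : HasDerivAt (fun s : ℝ => s - 1) 1 t := (hasDerivAt_id t).sub_const 1
      have hb : HasDerivAt (fun s : ℝ => 1 - s ^ (v - 1)) (0 - (v - 1) * t ^ (v - 2)) t :=
        (hasDerivAt_const t 1).sub h2
      have := ha.fun_mul hb
      exact this.congr_deriv (by ring)
    have hlin : HasDerivAt (fun s : ℝ => (1 - v) + v * s) (v * 1) t :=
      ((hasDerivAt_id t).const_mul v).const_add (1 - v)
    have := (hlin.fun_sub h1).fun_sub ((h3.const_mul v).div_const 2)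
    exact this.congr_deriv (by ring)
  have hdH : ∀ t : ℝ, 0 < t → HasDerivAt H
      (v * ((1 - ((1 + t) / 2) ^ (v - 1))
        + (t - 1) * (-((v - 1) * ((1 + t) / 2) ^ (v - 2) * (1 / 2))))
        + v * t ^ (v - 1) - v * 1) t := by
    intro t ht0
    have hm0 : (0:ℝ) < (1 + t) / 2 := by linarith
    have h1 : HasDerivAt (fun s : ℝ => s ^ v) (v * t ^ (v - 1)) t :=
      Real.hasDerivAt_rpow_const (Or.inl ht0.ne')
    have hin : HasDerivAt (fun s : ℝ => (1 + s) / 2) (1 / 2) t :=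
      ((hasDerivAt_id t).const_add 1).div_const 2
    have h4 : HasDerivAt (fun s : ℝ => ((1 + s) / 2) ^ (v - 1))
        ((v - 1) * ((1 + t) / 2) ^ (v - 2) * (1 / 2)) t := by
      have hout := Real.hasDerivAt_rpow_const (x := (1 + t) / 2) (p := v - 1) (Or.inl hm0.ne')
      have := hout.comp t hin
      rwa [show v - 1 - 1 = v - 2 by ring] at this
    have h5 : HasDerivAt (fun s : ℝ => (s - 1) * (1 - ((1 + s) / 2) ^ (v - 1)))
        ((1 - ((1 + t) / 2) ^ (v - 1))
          + (t - 1) * (-((v - 1) * ((1 + t) / 2) ^ (v - 2) * (1 / 2)))) t := by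
      have ha : HasDerivAt (fun s : ℝ => s - 1) 1 t := (hasDerivAt_id t).sub_const 1
      have hb : HasDerivAt (fun s : ℝ => 1 - ((1 + s) / 2) ^ (v - 1))
          (0 - (v - 1) * ((1 + t) / 2) ^ (v - 2) * (1 / 2)) t :=
        (hasDerivAt_const t 1).sub h4
      have := ha.fun_mul hb
      exact this.congr_deriv (by ring)
    have hlin : HasDerivAt (fun s : ℝ => (1 - v) + v * s) (v * 1) t :=
      ((hasDerivAt_id t).const_mul v).const_add (1 - v)
    exact ((h5.const_mul v).add h1).sub hlin
  -- key inequality 1 : 1 - t^(v-1) - (1-v)(t-1) t^(v-2) ≥ 0 for t ≥ 1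
  have key1 : ∀ t : ℝ, 1 ≤ t → 0 ≤ 1 - t ^ (v - 1) - (1 - v) * (t - 1) * t ^ (v - 2) := by
    intro t ht
    have ht0 : (0:ℝ) < t := lt_of_lt_of_le one_pos ht
    have hb : 1 + (2 - v) * (t - 1) ≤ t ^ (2 - v) := by
      have h := one_add_mul_self_le_rpow_one_add (s := t - 1) (by linarith) (p := 2 - v)
        (by linarith)
      rwa [show (1:ℝ) + (t - 1) = t by ring] at h
    have e1 : t ^ (v - 1) * t ^ (2 - v) = t := by
      rw [← rpow_add ht0, show v - 1 + (2 - v) = 1 by ring, rpow_one]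
    have e2 : t ^ (v - 2) * t ^ (2 - v) = 1 := by
      rw [← rpow_add ht0, show v - 2 + (2 - v) = 0 by ring, rpow_zero]
    have hC : 0 < t ^ (2 - v) := rpow_pos_of_pos ht0 _
    have eq1 : (1 - t ^ (v - 1) - (1 - v) * (t - 1) * t ^ (v - 2)) * t ^ (2 - v)
        = t ^ (2 - v) - t - (1 - v) * (t - 1) := by
      linear_combination (-1 : ℝ) * e1 - (1 - v) * (t - 1) * e2
    have h0 : 0 ≤ (1 - t ^ (v - 1) - (1 - v) * (t - 1) * t ^ (v - 2)) * t ^ (2 - v) := by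
      rw [eq1]; nlinarith [hb]
    exact (mul_nonneg_iff_of_pos_right hC).mp h0
  -- key inequality 2 : tangent line inequality at m = (1+t)/2
  have key2 : ∀ t : ℝ, 1 ≤ t →
      0 ≤ t ^ (v - 1) - ((1 + t) / 2) ^ (v - 1)
        + (1 - v) * (t - (1 + t) / 2) * ((1 + t) / 2) ^ (v - 2) := by
    intro t ht
    obtain ⟨m, hmdef⟩ : ∃ m : ℝ, m = (1 + t) / 2 := ⟨_, rfl⟩
    rw [← hmdef]
    have hm0 : (0:ℝ) < m := by rw [hmdef]; linarith
    have hm1 : (1:ℝ) ≤ m := by rw [hmdef]; linarith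
    obtain ⟨u, hudef⟩ : ∃ u : ℝ, u = t / m := ⟨_, rfl⟩
    have htmu : m * u = t := by
      rw [hudef]; field_simp
    have hu1 : (1:ℝ) ≤ u := by
      rw [hudef, le_div_iff₀ hm0, hmdef]; linarith
    have hu0 : (0:ℝ) < u := lt_of_lt_of_le one_pos hu1
    have hb2 : 1 + (v - 1) * (u - 1) ≤ u ^ (v - 1) :=
      bern_neg hu1 (by linarith) (by linarith)
    have e3 : t ^ (v - 1) = m ^ (v - 1) * u ^ (v - 1) := by
      rw [← htmu, mul_rpow hm0.le hu0.le]
    have e4 : m ^ (v - 2) * m = m ^ (v - 1) := by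
      rw [show v - 1 = v - 2 + 1 by ring, Real.rpow_add_one hm0.ne']
    have hQ : 0 < m ^ (v - 1) := rpow_pos_of_pos hm0 _
    have eqk : t ^ (v - 1) - m ^ (v - 1) + (1 - v) * (t - m) * m ^ (v - 2)
        = m ^ (v - 1) * (u ^ (v - 1) - 1 - (v - 1) * (u - 1)) := by
      linear_combination e3 + (1 - v) * (u - 1) * e4 - (1 - v) * m ^ (v - 2) * htmu
    rw [eqk]
    exact mul_nonneg hQ.le (by linarith)
  -- monotonicity of F on [1, ∞)
  have hFmono : MonotoneOn F (Ici 1) := by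
    apply monotoneOn_of_deriv_nonneg (convex_Ici 1)
    · intro t ht
      exact (hdF t (lt_of_lt_of_le one_pos ht)).continuousAt.continuousWithinAt
    · intro t ht
      rw [interior_Ici] at ht
      exact (hdF t (lt_trans one_pos ht)).differentiableAt.differentiableWithinAt
    · intro t ht
      rw [interior_Ici] at ht
      rw [(hdF t (lt_trans one_pos ht)).deriv]
      have hk := key1 t ht.le
      nlinarith [mul_nonneg hv0 hk]
  have hHmono : MonotoneOn H (Ici 1) := by
    apply monotoneOn_of_deriv_nonneg (convex_Ici 1)
    · intro t ht
      exact (hdH t (lt_of_lt_of_le one_pos ht)).continuousAt.continuousWithinAt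
    · intro t ht
      rw [interior_Ici] at ht
      exact (hdH t (lt_trans one_pos ht)).differentiableAt.differentiableWithinAt
    · intro t ht
      rw [interior_Ici] at ht
      rw [(hdH t (lt_trans one_pos ht)).deriv]
      have hk := key2 t ht.le
      nlinarith [mul_nonneg hv0 hk]
  have hF1 : F 1 = 0 := by
    simp [hFdef, Real.one_rpow]
  have hH1 : H 1 = 0 := by
    simp [hHdef, Real.one_rpow]
  have hFx : 0 ≤ F x := by
    have := hFmono (self_mem_Ici) (show x ∈ Ici (1:ℝ) from hx) hx
    rw [hF1] at this; exact this
  have hHx : 0 ≤ H x := by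
    have := hHmono (self_mem_Ici) (show x ∈ Ici (1:ℝ) from hx) hx
    rw [hH1] at this; exact this
  rw [hFdef] at hFx
  rw [hHdef] at hHx
  simp only at hFx hHx
  constructor
  · nlinarith [hFx]
  · nlinarith [hHx]
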